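/- Let D ⊆ M and let f : M → [0,+∞] be r.u.u.s.c. in D. Assume (i) t·cl(D) ⊆ D for all t ∈ [0,1), and (ii) f is lower semicontinuous in D, i.e., for every ξ ∈ D and every sequence (ξ_n) ⊂ D with ξ_n → ξ one has f(ξ) ≤ liminf_n f(ξ_n). Then for every ξ ∈ cl(D) \ D the limit lim_{t→1⁻} f(tξ) exists in [0,+∞], and the function f̂ : M → [0,+∞] defined by f̂(ξ) = f(ξ) if ξ ∈ D, f̂(ξ) = lim_{t→1⁻} f(tξ) if ξ ∈ cl(D) \ D, and f̂(ξ) = +∞ if ξ ∉ cl(D), is r.u.u.s.c. in cl(D) and agrees with f on D. -/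

import Mathlib

open Filter
open scoped Pointwise ENNReal Topology

/-- `f` is radially uniformly upper semicontinuous (r.u.u.s.c.) in `A`. -/
def RUUSC {E : Type*} [NormedAddCommGroup E] [NormedSpace ℝ E]
    (f : E → ℝ≥0∞) (A : Set E) : Prop :=
  ∀ ε : ℝ, 0 < ε → ∃ η : ℝ, 0 < η ∧
    ∀ ξ ∈ A, ∀ t ∈ Set.Ico (0 : ℝ) 1, 1 - t < η → f (t • ξ) ≤ f ξ + ENNReal.ofReal ε

-- The extension `f̂` of `f`, defined via the radial limit on `cl D \ D`.
open Classical in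
noncomputable def extRadial {E : Type*} [NormedAddCommGroup E] [NormedSpace ℝ E]
    (f : E → ℝ≥0∞) (D : Set E) (ξ : E) : ℝ≥0∞ :=
  if ξ ∈ D then f ξ
  else if ξ ∈ closure D then limsup (fun t : ℝ => f (t • ξ)) (𝓝[<] (1 : ℝ))
  else ⊤

private lemma key_lemma {E : Type*} [NormedAddCommGroup E] [NormedSpace ℝ E]
    {f : E → ℝ≥0∞} {D : Set E} {ε η : ℝ}
    (hη : ∀ ξ ∈ D, ∀ t ∈ Set.Ico (0 : ℝ) 1, 1 - t < η → f (t • ξ) ≤ f ξ + ENNReal.ofReal ε)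
    (hD : ∀ t ∈ Set.Ico (0 : ℝ) 1, t • closure D ⊆ D)
    {ξ : E} (hξ : ξ ∈ closure D) {t s : ℝ} (ht0 : 0 ≤ t) (hts : t < s) (hs1 : s < 1)
    (htη : 1 - t < η) : f (t • ξ) ≤ f (s • ξ) + ENNReal.ofReal ε := by
  have hs0 : 0 < s := ht0.trans_lt hts
  have hsD : s • ξ ∈ D := hD s ⟨hs0.le, hs1⟩ (Set.smul_mem_smul_set hξ)
  have h1 : (t / s) • (s • ξ) = t • ξ := by
    rw [smul_smul, div_mul_cancel₀ _ hs0.ne']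
  have h2 : t ≤ t / s := le_div_self ht0 hs0 hs1.le
  calc f (t • ξ) = f ((t / s) • (s • ξ)) := by rw [h1]
    _ ≤ f (s • ξ) + ENNReal.ofReal ε :=
      hη _ hsD _ ⟨div_nonneg ht0 hs0.le, (div_lt_one hs0).2 hts⟩
        (lt_of_le_of_lt (by linarith) htη)

private lemma key_lemma2 {E : Type*} [NormedAddCommGroup E] [NormedSpace ℝ E]
    {f : E → ℝ≥0∞} {D : Set E} {ε η : ℝ}
    (hη : ∀ ξ ∈ D, ∀ t ∈ Set.Ico (0 : ℝ) 1, 1 - t < η → f (t • ξ) ≤ f ξ + ENNReal.ofReal ε)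
    (hD : ∀ t ∈ Set.Ico (0 : ℝ) 1, t • closure D ⊆ D)
    {ξ : E} (hξ : ξ ∈ closure D) {t : ℝ} (ht0 : 0 ≤ t) (ht1 : t < 1) (htη : 1 - t < η) :
    f (t • ξ) ≤ liminf (fun s : ℝ => f (s • ξ)) (𝓝[<] (1 : ℝ)) + ENNReal.ofReal ε := by
  have hev : ∀ᶠ s in 𝓝[<] (1 : ℝ), f (t • ξ) ≤ f (s • ξ) + ENNReal.ofReal ε := by
    filter_upwards [Ioo_mem_nhdsLT_of_mem (⟨ht1, le_rfl⟩ : (1 : ℝ) ∈ Set.Ioc t 1)] with s hs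
    exact key_lemma hη hD hξ ht0 hs.1 hs.2 htη
  calc f (t • ξ) ≤ liminf (fun s : ℝ => f (s • ξ) + ENNReal.ofReal ε) (𝓝[<] (1 : ℝ)) :=
      le_liminf_of_le (by isBoundedDefault) hev
    _ = _ := liminf_add_const _ _ _ (by isBoundedDefault) (by isBoundedDefault)

/-- Extension of r.u.u.s.c. functions to the closure of their domain. -/
theorem stmt_6 {E : Type*} [NormedAddCommGroup E] [NormedSpace ℝ E] [FiniteDimensional ℝ E]
    {D : Set E} (f : E → ℝ≥0∞) (hf : RUUSC f D)
    (hD : ∀ t ∈ Set.Ico (0 : ℝ) 1, t • closure D ⊆ D)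
    (hlsc : ∀ ξ ∈ D, ∀ u : ℕ → E, (∀ n, u n ∈ D) → Tendsto u atTop (𝓝 ξ) →
      f ξ ≤ liminf (fun n => f (u n)) atTop) :
    (∀ ξ ∈ closure D \ D, ∃ L : ℝ≥0∞,
        Tendsto (fun t : ℝ => f (t • ξ)) (𝓝[<] (1 : ℝ)) (𝓝 L)) ∧
    RUUSC (extRadial f D) (closure D) ∧
    (∀ ξ ∈ D, extRadial f D ξ = f ξ) := by
  refine ⟨?_, ?_, fun ξ hξ => if_pos hξ⟩
  · -- existence of the radial limit
    rintro ξ ⟨hξc, -⟩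
    have hle : limsup (fun t : ℝ => f (t • ξ)) (𝓝[<] (1 : ℝ))
        ≤ liminf (fun t : ℝ => f (t • ξ)) (𝓝[<] (1 : ℝ)) := by
      refine ENNReal.le_of_forall_pos_le_add fun ε hε _ => ?_
      obtain ⟨η, hη0, hη⟩ := hf ε hε
      have hmax : max 0 (1 - η) < 1 := by
        rw [max_lt_iff]; constructor <;> linarith
      refine limsup_le_of_le (by isBoundedDefault) ?_
      filter_upwards [Ioo_mem_nhdsLT_of_mem
        (⟨hmax, le_rfl⟩ : (1 : ℝ) ∈ Set.Ioc (max 0 (1 - η)) 1)] with t ht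
      have ht0 : 0 ≤ t := le_of_lt ((le_max_left _ _).trans_lt ht.1)
      have htη : 1 - t < η := by
        have := (le_max_right 0 (1 - η)).trans_lt ht.1; linarith
      have := key_lemma2 hη hD hξc ht0 ht.2 htη
      rwa [ENNReal.ofReal_coe_nnreal] at this
    have hge : liminf (fun t : ℝ => f (t • ξ)) (𝓝[<] (1 : ℝ))
        ≤ limsup (fun t : ℝ => f (t • ξ)) (𝓝[<] (1 : ℝ)) := liminf_le_limsup
    exact ⟨limsup (fun t : ℝ => f (t • ξ)) (𝓝[<] (1 : ℝ)),
      tendsto_of_liminf_eq_limsup (le_antisymm hge hle) rfl⟩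
  · -- RUUSC of the extension
    intro ε hε
    obtain ⟨η, hη0, hη⟩ := hf ε hε
    refine ⟨η, hη0, ?_⟩
    intro ξ hξ t ht htη
    have htD : t • ξ ∈ D := hD t ht (Set.smul_mem_smul_set hξ)
    rw [show extRadial f D (t • ξ) = f (t • ξ) from if_pos htD]
    by_cases hξD : ξ ∈ D
    · rw [show extRadial f D ξ = f ξ from if_pos hξD]
      exact hη ξ hξD t ht htη
    · rw [show extRadial f D ξ
          = limsup (fun s : ℝ => f (s • ξ)) (𝓝[<] (1 : ℝ)) from by
        rw [extRadial, if_neg hξD, if_pos hξ]]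
      calc f (t • ξ) ≤ liminf (fun s : ℝ => f (s • ξ)) (𝓝[<] (1 : ℝ)) + ENNReal.ofReal ε :=
          key_lemma2 hη hD hξ ht.1 ht.2 htη
        _ ≤ _ := add_le_add_left (liminf_le_limsup (f := 𝓝[<] (1 : ℝ)) (u := fun s : ℝ => f (s • ξ))) _
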